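/- arXiv:0707.2125 — 4 statements merged into one kernel-verified Lean document; each statement's English description precedes it below -/
import Mathlib

section
/- Let g : (−1,1) → ℂ be a C^∞ function which is odd, i.e. g(−x) = −g(x) for all x ∈ (−1,1). Then there exists a C^∞ function u : [0,1) → ℂ such that g(x) = x·u(x²) for all x ∈ (−1,1). -/
open Complex Set

noncomputable section

namespace WhitneyFactorizationAux

open Filter intervalIntegral
open scoped Topology

local notation "J" => Set.Ioo (-1:ℝ) 1

lemma zero_mem_J : (0:ℝ) ∈ J := by norm_num

lemma neg_mem_J {x : ℝ} (hx : x ∈ J) : -x ∈ J := by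
  simp only [mem_Ioo] at hx ⊢; constructor <;> linarith [hx.1, hx.2]

lemma hasDerivAt_ofReal (x : ℝ) : HasDerivAt (fun y : ℝ => (y:ℂ)) 1 x := by
  exact Complex.ofRealCLM.hasDerivAt (x := x)

lemma hasDerivAt_mono (k : ℕ) (x : ℝ) :
    HasDerivAt (fun y : ℝ => (y:ℂ)^k) ((k:ℂ) * (x:ℂ)^(k-1)) x :=
  (hasDerivAt_pow k ((x:ℂ))).comp_ofReal

lemma contDiff_mono (k : ℕ) : ContDiff ℝ (⊤ : ℕ∞) (fun y : ℝ => (y:ℂ)^k) :=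
  Complex.ofRealCLM.contDiff.pow k

lemma smooth_iteratedDeriv {f : ℝ → ℂ} (hf : ContDiffOn ℝ (⊤ : ℕ∞) f J) (j : ℕ) :
    ContDiffOn ℝ (⊤ : ℕ∞) (iteratedDeriv j f) J := by
  induction j with
  | zero => simpa [iteratedDeriv_zero] using hf
  | succ j ih =>
      rw [iteratedDeriv_succ]
      exact ih.deriv_of_isOpen isOpen_Ioo (le_of_eq ENat.coe_top_add_one)

lemma diffAt_iteratedDeriv {f : ℝ → ℂ} (hf : ContDiffOn ℝ (⊤ : ℕ∞) f J) (j : ℕ)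
    {x : ℝ} (hx : x ∈ J) : DifferentiableAt ℝ (iteratedDeriv j f) x :=
  ((smooth_iteratedDeriv hf j).differentiableOn (by simp)).differentiableAt
    (isOpen_Ioo.mem_nhds hx)

/-- parity of iterated derivatives of an odd function -/
lemma iteratedDeriv_odd {f : ℝ → ℂ} (hodd : ∀ x ∈ J, f (-x) = -f x) (j : ℕ)
    {x : ℝ} (hx : x ∈ J) :
    iteratedDeriv j f (-x) = ((-1:ℝ) ^ (j+1)) • iteratedDeriv j f x := by
  have h1 : (fun y => f (-y)) =ᶠ[𝓝 x] (fun y => -f y) :=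
    eventuallyEq_of_mem (isOpen_Ioo.mem_nhds hx) (fun y hy => hodd y hy)
  have h2 := h1.iteratedDeriv_eq j
  rw [iteratedDeriv_comp_neg, iteratedDeriv_fun_neg] at h2
  have h3 : iteratedDeriv j f (-x) = ((-1:ℝ)^j) • (-iteratedDeriv j f x) := by
    calc iteratedDeriv j f (-x) = ((-1:ℝ)^j) • (((-1:ℝ)^j) • iteratedDeriv j f (-x)) := by
          rw [smul_smul, ← pow_add]; simp [pow_mul]
    _ = ((-1:ℝ)^j) • (-iteratedDeriv j f x) := by rw [h2]
  rw [h3, pow_succ]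
  simp [smul_smul, mul_comm]

lemma iteratedDeriv_odd_even_zero {f : ℝ → ℂ} (hodd : ∀ x ∈ J, f (-x) = -f x) {j : ℕ}
    (hj : Even j) : iteratedDeriv j f 0 = 0 := by
  have h1 := iteratedDeriv_odd hodd j zero_mem_J
  rw [neg_zero] at h1
  rcases hj with ⟨l, hl⟩
  have hpow : ((-1:ℝ) ^ (j+1)) = -1 := Odd.neg_one_pow ⟨l, by omega⟩
  rw [hpow] at h1
  simp only [neg_smul, one_smul] at h1
  have h0 : iteratedDeriv j f 0 + iteratedDeriv j f 0 = 0 := by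
    nth_rewrite 1 [h1]; ring
  exact add_self_eq_zero.mp h0

/-- iterated derivatives of `x * f' - c * f` on the open interval -/
lemma iteratedDeriv_r {f : ℝ → ℂ} (hf : ContDiffOn ℝ (⊤ : ℕ∞) f J) (c : ℂ) (j : ℕ) :
    Set.EqOn (iteratedDeriv j (fun x : ℝ => (x:ℂ) * deriv f x - c * f x))
      (fun x => (x:ℂ) * iteratedDeriv (j+1) f x + ((j:ℂ) - c) * iteratedDeriv j f x) J := by
  have hder : ∀ (j : ℕ) {x : ℝ}, x ∈ J → DifferentiableAt ℝ (iteratedDeriv j f) x :=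
    fun j {x} hx => diffAt_iteratedDeriv hf j hx
  induction j with
  | zero =>
      intro x hx
      simp [iteratedDeriv_zero, iteratedDeriv_one, Nat.cast_zero]
      ring
  | succ j ih =>
      intro x hx
      have hmem := isOpen_Ioo.mem_nhds hx
      have h1 : iteratedDeriv (j+1) (fun x : ℝ => (x:ℂ) * deriv f x - c * f x) x
          = deriv (fun y : ℝ => (y:ℂ) * iteratedDeriv (j+1) f y
              + ((j:ℂ) - c) * iteratedDeriv j f y) x := by
        rw [iteratedDeriv_succ]
        exact Filter.EventuallyEq.deriv_eq (eventuallyEq_of_mem hmem ih)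
      rw [h1]
      have hd1 : HasDerivAt (fun y : ℝ => (y:ℂ) * iteratedDeriv (j+1) f y)
          ((1:ℂ) * iteratedDeriv (j+1) f x + (x:ℂ) * iteratedDeriv (j+2) f x) x := by
        have := (hasDerivAt_ofReal x).fun_mul ((hder (j+1) hx).hasDerivAt)
        simpa [iteratedDeriv_succ] using this
      have hd2 : HasDerivAt (fun y : ℝ => ((j:ℂ) - c) * iteratedDeriv j f y)
          (((j:ℂ) - c) * iteratedDeriv (j+1) f x) x := by
        have := ((hder j hx).hasDerivAt).const_mul ((j:ℂ) - c)
        simpa [iteratedDeriv_succ] using this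
      rw [(hd1.fun_add hd2).deriv]
      push_cast
      ring

/-- iterated derivative of a difference with a globally smooth function, on J -/
lemma iteratedDeriv_sub_on {f h : ℝ → ℂ} (hf : ContDiffOn ℝ (⊤ : ℕ∞) f J)
    (hh : ContDiff ℝ (⊤ : ℕ∞) h) (j : ℕ) :
    Set.EqOn (iteratedDeriv j (fun x => f x - h x))
      (fun x => iteratedDeriv j f x - iteratedDeriv j h x) J := by
  have hder : ∀ (j : ℕ) {x : ℝ}, x ∈ J → DifferentiableAt ℝ (iteratedDeriv j f) x :=
    fun j {x} hx => diffAt_iteratedDeriv hf j hx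
  induction j with
  | zero => intro x _; simp
  | succ j ih =>
      intro x hx
      have hmem := isOpen_Ioo.mem_nhds hx
      have h1 : iteratedDeriv (j+1) (fun x => f x - h x) x
          = deriv (fun y => iteratedDeriv j f y - iteratedDeriv j h y) x := by
        rw [iteratedDeriv_succ]
        exact Filter.EventuallyEq.deriv_eq (eventuallyEq_of_mem hmem ih)
      rw [h1, iteratedDeriv_succ, iteratedDeriv_succ]
      have hdh : DifferentiableAt ℝ (iteratedDeriv j h) x := by
        rw [iteratedDeriv_eq_iterate]
        exact (hh.iterate_deriv j).differentiable (by simp) x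
      exact deriv_sub (hder j hx) hdh

lemma iteratedDeriv_monomial (k : ℕ) : ∀ j ≤ k, ∀ x : ℝ,
    iteratedDeriv j (fun y : ℝ => (y:ℂ)^k) x = (k.descFactorial j : ℂ) * (x:ℂ)^(k-j) := by
  intro j
  induction j with
  | zero => intro _ x; simp
  | succ j ih =>
      intro hjk x
      have ih' : iteratedDeriv j (fun y : ℝ => (y:ℂ)^k)
          = fun x : ℝ => (k.descFactorial j : ℂ) * (x:ℂ)^(k-j) :=
        funext (fun x => ih (by omega) x)
      rw [iteratedDeriv_succ, ih']
      have hd : HasDerivAt (fun x : ℝ => (k.descFactorial j : ℂ) * (x:ℂ)^(k-j))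
          ((k.descFactorial j : ℂ) * (((k-j:ℕ):ℂ) * (x:ℂ)^(k-j-1))) x :=
        (hasDerivAt_mono (k-j) x).const_mul (k.descFactorial j : ℂ)
      rw [hd.deriv, Nat.descFactorial_succ]
      have h2 : k - j - 1 = k - (j+1) := by omega
      rw [h2]
      push_cast
      ring

lemma mem_J_of_abs_lt {t δ : ℝ} (h : |t| < δ) (hδ : δ ≤ 1) : t ∈ J := by
  rw [abs_lt] at h
  constructor <;> linarith [h.1, h.2]

/-- key quantitative estimate: a function vanishing to order `k` at `0` whose `k`-th
derivative is bounded by `ε` is bounded by `ε |x|^k / k!`. -/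
lemma bound_E : ∀ (k : ℕ) (f : ℝ → ℂ), ContDiffOn ℝ (⊤ : ℕ∞) f J →
    (∀ j, j < k → iteratedDeriv j f 0 = 0) → ∀ (δ ε : ℝ), 0 < δ → δ ≤ 1 → 0 ≤ ε →
    (∀ t : ℝ, |t| < δ → ‖iteratedDeriv k f t‖ ≤ ε) →
    ∀ x : ℝ, |x| < δ → ‖f x‖ ≤ ε * |x|^k / k.factorial := by
  intro k
  induction k with
  | zero =>
      intro f _ _ δ ε _ _ _ hbd x hx
      simpa using hbd x hx
  | succ k ih =>
      intro f hf hvan δ ε hδ hδ1 hε hbd x hx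
      have hdf : ContDiffOn ℝ (⊤ : ℕ∞) (deriv f) J :=
        hf.deriv_of_isOpen isOpen_Ioo (le_of_eq ENat.coe_top_add_one)
      have hder : ∀ t : ℝ, |t| < δ → HasDerivAt f (deriv f t) t := fun t ht =>
        ((hf.differentiableOn (by simp)).differentiableAt
          (isOpen_Ioo.mem_nhds (mem_J_of_abs_lt ht hδ1))).hasDerivAt
      have hb' : ∀ t : ℝ, |t| < δ → ‖deriv f t‖ ≤ ε * |t|^k / k.factorial := by
        apply ih (deriv f) hdf _ δ ε hδ hδ1 hε
        · intro t ht
          rw [← iteratedDeriv_succ']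
          exact hbd t ht
        · intro j hj
          rw [← iteratedDeriv_succ']
          exact hvan (j+1) (by omega)
      have hf0 : f 0 = 0 := hvan 0 (by omega)
      have hxδ : |x| ≤ δ := hx.le
      have hcont : ContinuousOn f (Icc (-|x|) |x|) := by
        apply (hf.differentiableOn (by simp)).continuousOn.mono
        intro t ht
        simp only [mem_Icc] at ht
        exact mem_J_of_abs_lt (lt_of_le_of_lt (abs_le.mpr ⟨ht.1, ht.2⟩) hx) hδ1
      have hB : ∀ t : ℝ, HasDerivAt (fun t : ℝ => ε / (k+1).factorial * t^(k+1))
          (ε / k.factorial * t^k) t := by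
        intro t
        have h := (hasDerivAt_pow (k+1) t).const_mul (ε / ((k+1).factorial : ℝ))
        refine h.congr_deriv ?_
        rw [Nat.add_sub_cancel]; push_cast
        have hk : ((k+1).factorial : ℝ) = (k+1) * k.factorial := by
          rw [Nat.factorial_succ]; push_cast; ring
        have h1 : (k.factorial : ℝ) ≠ 0 := Nat.cast_ne_zero.mpr k.factorial_ne_zero
        rw [hk]
        field_simp
      have main : ∀ F : ℝ → ℂ, ContinuousOn F (Icc 0 |x|) →
          (∀ t ∈ Ico (0:ℝ) |x|, HasDerivWithinAt F (deriv F t) (Ici t) t) →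
          (∀ t ∈ Ico (0:ℝ) |x|, ‖deriv F t‖ ≤ ε / k.factorial * t^k) →
          F 0 = 0 → ‖F |x|‖ ≤ ε * |x|^(k+1) / (k+1).factorial := by
        intro F hFc hFd hFb hF0
        have key := image_norm_le_of_norm_deriv_right_le_deriv_boundary
          hFc hFd (B := fun t => ε / (k+1).factorial * t^(k+1))
          (B' := fun t => ε / k.factorial * t^k)
          (by simp [hF0]) hB hFb
        have h2 := key (right_mem_Icc.mpr (abs_nonneg x))
        calc ‖F |x|‖ ≤ ε / (k+1).factorial * |x|^(k+1) := h2
          _ = ε * |x|^(k+1) / (k+1).factorial := by ring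
      rcases le_or_gt 0 x with hx0 | hx0
      · have hax : |x| = x := _root_.abs_of_nonneg hx0
        have hres : ‖f |x|‖ ≤ ε * |x|^(k+1) / (k+1).factorial := by
          apply main f (hcont.mono (Icc_subset_Icc (by linarith [abs_nonneg x]) le_rfl))
          · intro t ht
            have : |t| < δ := by
              rw [_root_.abs_of_nonneg ht.1]
              exact lt_of_lt_of_le ht.2 hxδ
            exact (hder t this).hasDerivWithinAt
          · intro t ht
            have htδ : |t| < δ := by
              rw [_root_.abs_of_nonneg ht.1]
              exact lt_of_lt_of_le ht.2 hxδ
            calc ‖deriv f t‖ ≤ ε * |t|^k / k.factorial := hb' t htδ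
              _ = ε / k.factorial * t^k := by rw [_root_.abs_of_nonneg ht.1]; ring
          · exact hf0
        rw [hax] at hres
        calc ‖f x‖ ≤ ε * x^(k+1) / (k+1).factorial := hres
          _ = ε * |x|^(k+1) / (k+1).factorial := by rw [hax]
      · have hax : |x| = -x := abs_of_neg hx0
        have hres : ‖f (-|x|)‖ ≤ ε * |x|^(k+1) / (k+1).factorial := by
          apply main (fun t => f (-t))
          · apply hcont.comp continuousOn_neg
            intro t ht
            simp only [mem_Icc] at ht ⊢
            constructor <;> linarith [ht.1, ht.2, abs_nonneg x]
          · intro t ht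
            have htδ : |(-t)| < δ := by
              rw [abs_neg, _root_.abs_of_nonneg ht.1]
              exact lt_of_lt_of_le ht.2 hxδ
            have h1 : HasDerivAt (fun t : ℝ => f (-t)) ((-1:ℝ) • deriv f (-t)) t :=
              (hder (-t) htδ).scomp t (hasDerivAt_neg' t)
            have h2 : deriv (fun t : ℝ => f (-t)) t = (-1:ℝ) • deriv f (-t) := h1.deriv
            rw [h2]
            exact h1.hasDerivWithinAt
          · intro t ht
            have htδ : |(-t)| < δ := by
              rw [abs_neg, _root_.abs_of_nonneg ht.1]
              exact lt_of_lt_of_le ht.2 hxδ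
            have h1 : HasDerivAt (fun t : ℝ => f (-t)) ((-1:ℝ) • deriv f (-t)) t :=
              (hder (-t) htδ).scomp t (hasDerivAt_neg' t)
            rw [h1.deriv]
            calc ‖(-1:ℝ) • deriv f (-t)‖ = ‖deriv f (-t)‖ := by simp
              _ ≤ ε * |(-t)|^k / k.factorial := hb' (-t) htδ
              _ = ε / k.factorial * t^k := by rw [abs_neg, _root_.abs_of_nonneg ht.1]; ring
          · simpa using hf0
        rw [hax, neg_neg] at hres
        calc ‖f x‖ ≤ ε * (-x)^(k+1) / (k+1).factorial := hres
          _ = ε * |x|^(k+1) / (k+1).factorial := by rw [hax]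

lemma iteratedDeriv_cmul (c : ℂ) {m : ℝ → ℂ} (hm : ContDiff ℝ (⊤ : ℕ∞) m) (j : ℕ) :
    iteratedDeriv j (fun y => c * m y) = fun x => c * iteratedDeriv j m x := by
  induction j with
  | zero => simp
  | succ j ih =>
      funext x
      rw [iteratedDeriv_succ, ih, iteratedDeriv_succ]
      apply deriv_const_mul
      have := (hm.iterate_deriv j).differentiable (by simp) x
      rwa [← iteratedDeriv_eq_iterate] at this

/-- Taylor-type limit: `f x / x^k → f⁽ᵏ⁾(0)/k!`. -/
lemma tendsto_div_pow (k : ℕ) (f : ℝ → ℂ) (hf : ContDiffOn ℝ (⊤ : ℕ∞) f J)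
    (hvan : ∀ j, j < k → iteratedDeriv j f 0 = 0) :
    Filter.Tendsto (fun x : ℝ => f x / (x:ℂ)^k) (𝓝[≠] (0:ℝ))
      (𝓝 (iteratedDeriv k f 0 / (k.factorial : ℂ))) := by
  set c : ℂ := iteratedDeriv k f 0 / (k.factorial : ℂ) with hc
  set h : ℝ → ℂ := fun x => c * (x:ℂ)^k with hh
  have hhsm : ContDiff ℝ (⊤ : ℕ∞) h := contDiff_const.mul (contDiff_mono k)
  set F : ℝ → ℂ := fun x => f x - h x with hF
  have hFsm : ContDiffOn ℝ (⊤ : ℕ∞) F J := hf.sub hhsm.contDiffOn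
  have hfact : (k.factorial : ℂ) ≠ 0 := Nat.cast_ne_zero.mpr k.factorial_ne_zero
  have hhval : ∀ j ≤ k, iteratedDeriv j h 0 = if j = k then c * k.factorial else 0 := by
    intro j hj
    have h1 : iteratedDeriv j h = fun x => c * iteratedDeriv j (fun y : ℝ => (y:ℂ)^k) x :=
      iteratedDeriv_cmul c (contDiff_mono k) j
    rw [h1]
    show c * iteratedDeriv j (fun y : ℝ => (y:ℂ)^k) 0 = _
    rw [iteratedDeriv_monomial k j hj 0]
    rcases eq_or_lt_of_le hj with rfl | hjk
    · simp [Nat.descFactorial_self]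
    · have : k - j ≠ 0 := by omega
      simp [this, if_neg (by omega : ¬ j = k), zero_pow this]
  have hFvan : ∀ j ≤ k, iteratedDeriv j F 0 = 0 := by
    intro j hj
    rw [iteratedDeriv_sub_on hf hhsm j zero_mem_J]
    show iteratedDeriv j f 0 - iteratedDeriv j h 0 = 0
    rcases eq_or_lt_of_le hj with rfl | hjk
    · simp only [hhval j le_rfl, if_pos rfl, ↓reduceIte]
      rw [hc]
      field_simp
      ring
    · rw [hhval j hj, if_neg (by omega), hvan j hjk, sub_zero]
  have T0 : Filter.Tendsto (fun x : ℝ => F x / (x:ℂ)^k) (𝓝[≠] (0:ℝ)) (𝓝 0) := by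
    rw [NormedAddCommGroup.tendsto_nhds_zero]
    intro ε hε
    have hcontF : ContinuousAt (iteratedDeriv k F) 0 :=
      ((smooth_iteratedDeriv hFsm k).continuousOn).continuousAt (isOpen_Ioo.mem_nhds zero_mem_J)
    have hF0 : iteratedDeriv k F 0 = 0 := hFvan k le_rfl
    set ε' : ℝ := ε * k.factorial / 2 with hε'
    have hε'pos : 0 < ε' := by
      have : (0:ℝ) < k.factorial := by exact_mod_cast k.factorial_pos
      positivity
    obtain ⟨δ₀, hδ₀, hδball⟩ := Metric.continuousAt_iff.mp hcontF ε' hε'pos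
    set δ : ℝ := min δ₀ 1 with hδdef
    have hδpos : 0 < δ := lt_min hδ₀ one_pos
    have hδ1 : δ ≤ 1 := min_le_right _ _
    have hbd : ∀ t : ℝ, |t| < δ → ‖iteratedDeriv k F t‖ ≤ ε' := by
      intro t ht
      have hd : dist t 0 < δ₀ := by
        rw [Real.dist_eq, sub_zero]
        exact lt_of_lt_of_le ht (min_le_left _ _)
      have := hδball hd
      rw [dist_eq_norm, hF0, sub_zero] at this
      exact this.le
    have hbdF := bound_E k F hFsm (fun j hj => hFvan j hj.le) δ ε' hδpos hδ1 hε'pos.le hbd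
    have hball : Metric.ball (0:ℝ) δ ∈ 𝓝 (0:ℝ) := Metric.ball_mem_nhds 0 hδpos
    filter_upwards [mem_nhdsWithin_of_mem_nhds hball, self_mem_nhdsWithin] with x hxb hx0
    have hxδ : |x| < δ := by
      rw [Metric.mem_ball, Real.dist_eq, sub_zero] at hxb
      exact hxb
    have hxpos : (0:ℝ) < |x| := abs_pos.mpr hx0
    have hnorm : ‖F x / (x:ℂ)^k‖ = ‖F x‖ / |x|^k := by
      rw [norm_div, norm_pow, Complex.norm_real, Real.norm_eq_abs]
    rw [hnorm]
    have h1 : ‖F x‖ / |x|^k ≤ (ε' * |x|^k / k.factorial) / |x|^k := by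
      gcongr
      exact hbdF x hxδ
    have h2 : (ε' * |x|^k / k.factorial) / |x|^k = ε / 2 := by
      rw [hε']
      have hfr : (k.factorial : ℝ) ≠ 0 := Nat.cast_ne_zero.mpr k.factorial_ne_zero
      field_simp
    calc ‖F x‖ / |x|^k ≤ ε / 2 := h2 ▸ h1
      _ < ε := by linarith
  have hadd : Filter.Tendsto (fun x : ℝ => F x / (x:ℂ)^k + c) (𝓝[≠] (0:ℝ)) (𝓝 (0 + c)) :=
    T0.add tendsto_const_nhds
  rw [zero_add] at hadd
  apply hadd.congr'
  filter_upwards [self_mem_nhdsWithin] with x hx0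
  have hxne : ((x:ℂ))^k ≠ 0 := pow_ne_zero _ (by exact_mod_cast hx0)
  rw [hF, hh]
  field_simp
  ring

/-- the canonical half-line quotient function -/
def Tm (m : ℕ) (f : ℝ → ℂ) : ℝ → ℂ := fun t =>
  if t = 0 then iteratedDeriv (2*m+1) f 0 / (((2*m+1).factorial : ℕ) : ℂ)
  else f (Real.sqrt t) / ((Real.sqrt t : ℝ) : ℂ)^(2*m+1)

/-- the auxiliary odd function appearing when differentiating `Tm` -/
def rde (m : ℕ) (f : ℝ → ℂ) : ℝ → ℂ := fun x => (x:ℂ) * deriv f x - ((2*m+1 : ℕ) : ℂ) * f x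

lemma hasDerivAt_Tm (m : ℕ) (f : ℝ → ℂ) (hf : ContDiffOn ℝ (⊤ : ℕ∞) f J)
    {t : ℝ} (ht : t ∈ Ioo (0:ℝ) 1) :
    HasDerivAt (Tm m f) (Tm (m+1) (rde m f) t / 2) t := by
  obtain ⟨ht0, ht1⟩ := ht
  set s := Real.sqrt t with hs
  have hs0 : 0 < s := Real.sqrt_pos.mpr ht0
  have hs1 : s < 1 := by
    rw [hs, show (1:ℝ) = Real.sqrt 1 by simp]
    exact Real.sqrt_lt_sqrt ht0.le ht1
  have hsJ : s ∈ J := ⟨by linarith, hs1⟩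
  have hsne : s ≠ 0 := ne_of_gt hs0
  have hsneC : ((s:ℝ):ℂ) ≠ 0 := by exact_mod_cast hsne
  have h1 : HasDerivAt Real.sqrt (1/(2*s)) t := Real.hasDerivAt_sqrt (ne_of_gt ht0)
  have hfd : DifferentiableAt ℝ f s :=
    (hf.differentiableOn (by simp)).differentiableAt (isOpen_Ioo.mem_nhds hsJ)
  have hnum : HasDerivAt (fun u : ℝ => f (Real.sqrt u)) ((1/(2*s)) • deriv f s) t :=
    hfd.hasDerivAt.scomp t h1
  have hden : HasDerivAt (fun u : ℝ => ((Real.sqrt u : ℝ):ℂ)^(2*m+1))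
      ((1/(2*s)) • (((2*m+1 : ℕ):ℂ) * ((s:ℝ):ℂ)^(2*m+1-1))) t :=
    (hasDerivAt_mono (2*m+1) s).scomp t h1
  have hdiv := hnum.div hden (pow_ne_zero _ hsneC)
  have heq : HasDerivAt (fun u : ℝ => f (Real.sqrt u) / ((Real.sqrt u : ℝ):ℂ)^(2*m+1))
      (Tm (m+1) (rde m f) t / 2) t := by
    refine hdiv.congr_deriv ?_
    rw [Tm, if_neg (ne_of_gt ht0), rde]
    rw [← hs]
    have hexp : 2*m+1-1 = 2*m := by omega
    rw [hexp]
    have hsm : ∀ z : ℂ, (1/(2*s)) • z = (1/(2*(s:ℂ))) * z := by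
      intro z
      rw [Complex.real_smul]
      push_cast
      ring_nf
    rw [hsm, hsm]
    have h2 : 2*(m+1)+1 = 2*m+3 := by omega
    rw [h2]
    field_simp
    ring
  have hEv : (fun u : ℝ => f (Real.sqrt u) / ((Real.sqrt u : ℝ):ℂ)^(2*m+1)) =ᶠ[𝓝 t] Tm m f := by
    filter_upwards [isOpen_Ioi.mem_nhds (show t ∈ Ioi (0:ℝ) from ht0)] with u hu
    rw [Tm, if_neg (ne_of_gt hu)]
  exact heq.congr_of_eventuallyEq hEv.symm

lemma tendsto_Tm (m : ℕ) (f : ℝ → ℂ) (hf : ContDiffOn ℝ (⊤ : ℕ∞) f J)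
    (hvan : ∀ j, j < 2*m+1 → iteratedDeriv j f 0 = 0) :
    Filter.Tendsto (Tm m f) (𝓝[Ioo (0:ℝ) 1] 0) (𝓝 (Tm m f 0)) := by
  have hsq : Filter.Tendsto Real.sqrt (𝓝[Ioo (0:ℝ) 1] 0) (𝓝[≠] (0:ℝ)) := by
    rw [tendsto_nhdsWithin_iff]
    constructor
    · exact (Real.continuous_sqrt.tendsto' 0 0 (by simp)).mono_left nhdsWithin_le_nhds
    · filter_upwards [self_mem_nhdsWithin] with t ht
      simp only [mem_compl_iff, mem_singleton_iff]
      exact (Real.sqrt_ne_zero'.mpr ht.1)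
  have hcomp := (tendsto_div_pow (2*m+1) f hf hvan).comp hsq
  have hval : Tm m f 0 = iteratedDeriv (2*m+1) f 0 / (((2*m+1).factorial : ℕ) : ℂ) := by
    rw [Tm, if_pos rfl]
  rw [hval]
  apply hcomp.congr'
  filter_upwards [self_mem_nhdsWithin] with t ht
  simp only [Function.comp]
  rw [Tm, if_neg (ne_of_gt ht.1)]

lemma contWithinAt_Tm (m : ℕ) (f : ℝ → ℂ) (hf : ContDiffOn ℝ (⊤ : ℕ∞) f J)
    (hvan : ∀ j, j < 2*m+1 → iteratedDeriv j f 0 = 0) :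
    ContinuousWithinAt (Tm m f) (Ico (0:ℝ) 1) 0 := by
  rw [← continuousWithinAt_diff_self, Ico_diff_left]
  exact tendsto_Tm m f hf hvan

lemma rde_smooth (m : ℕ) (f : ℝ → ℂ) (hf : ContDiffOn ℝ (⊤ : ℕ∞) f J) :
    ContDiffOn ℝ (⊤ : ℕ∞) (rde m f) J := by
  apply ContDiffOn.sub
  · exact (Complex.ofRealCLM.contDiff.contDiffOn).mul
      (hf.deriv_of_isOpen isOpen_Ioo (le_of_eq ENat.coe_top_add_one))
  · exact contDiffOn_const.mul hf

lemma deriv_even {f : ℝ → ℂ} (hodd : ∀ x ∈ J, f (-x) = -f x) {x : ℝ} (hx : x ∈ J) :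
    deriv f (-x) = deriv f x := by
  have h1 : (fun y => f (-y)) =ᶠ[𝓝 x] (fun y => -f y) :=
    eventuallyEq_of_mem (isOpen_Ioo.mem_nhds hx) (fun y hy => hodd y hy)
  have h2 := h1.deriv_eq
  rw [deriv_comp_neg] at h2
  have h3 : deriv (fun y => -f y) x = -deriv f x := by
    rw [deriv.fun_neg]
  rw [h3] at h2
  exact neg_injective h2

lemma rde_odd (m : ℕ) (f : ℝ → ℂ) (hodd : ∀ x ∈ J, f (-x) = -f x) :
    ∀ x ∈ J, rde m f (-x) = -(rde m f x) := by
  intro x hx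
  rw [rde, rde, deriv_even hodd hx, hodd x hx]
  push_cast
  ring

lemma rde_van (m : ℕ) (f : ℝ → ℂ) (hf : ContDiffOn ℝ (⊤ : ℕ∞) f J)
    (hodd : ∀ x ∈ J, f (-x) = -f x)
    (hvan : ∀ j, j < 2*m+1 → iteratedDeriv j f 0 = 0) :
    ∀ j, j < 2*(m+1)+1 → iteratedDeriv j (rde m f) 0 = 0 := by
  intro j hj
  have h2 := iteratedDeriv_r hf ((2*m+1 : ℕ) : ℂ) j zero_mem_J
  have h3 : iteratedDeriv j (rde m f) 0
      = ((0:ℝ):ℂ) * iteratedDeriv (j+1) f 0 + ((j:ℂ) - ((2*m+1:ℕ):ℂ)) * iteratedDeriv j f 0 :=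
    h2
  rw [h3]
  simp only [Complex.ofReal_zero, zero_mul, zero_add]
  rcases lt_trichotomy j (2*m+1) with hlt | heq | hgt
  · rw [hvan j hlt, mul_zero]
  · subst heq
    rw [sub_self, zero_mul]
  · have hje : j = 2*m+2 := by omega
    subst hje
    rw [iteratedDeriv_odd_even_zero hodd ⟨m+1, by omega⟩, mul_zero]

/-- the main induction: `Tm m f` is `C^n` on `[0,1)` for every `n`. -/
theorem main_ind : ∀ (n : ℕ) (m : ℕ) (f : ℝ → ℂ), ContDiffOn ℝ (⊤ : ℕ∞) f J →
    (∀ x ∈ J, f (-x) = -f x) → (∀ j, j < 2*m+1 → iteratedDeriv j f 0 = 0) →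
    ContDiffOn ℝ n (Tm m f) (Ico (0:ℝ) 1) := by
  intro n
  induction n with
  | zero =>
      intro m f hf hodd hvan
      rw [show ((0:ℕ) : WithTop ℕ∞) = 0 by norm_cast, contDiffOn_zero]
      intro t ht
      rcases eq_or_lt_of_le ht.1 with h0 | h0
      · rw [← h0] at ht ⊢
        exact contWithinAt_Tm m f hf hvan
      · exact ((hasDerivAt_Tm m f hf ⟨h0, ht.2⟩).continuousAt).continuousWithinAt
  | succ n ih =>
      intro m f hf hodd hvan
      have hrs := rde_smooth m f hf
      have hro := rde_odd m f hodd
      have hrv := rde_van m f hf hodd hvan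
      have hv : ContDiffOn ℝ n (Tm (m+1) (rde m f)) (Ico (0:ℝ) 1) := ih (m+1) (rde m f) hrs hro hrv
      set v : ℝ → ℂ := Tm (m+1) (rde m f) with hvdef
      set c : ℂ := iteratedDeriv (2*m+1) f 0 / (((2*m+1).factorial : ℕ) : ℂ) with hcdef
      set u : ℝ → ℂ := fun t => c + ∫ σ in (0:ℝ)..t, v σ / 2 with hudef
      have hvc : ContinuousOn (fun σ => v σ / 2) (Ico (0:ℝ) 1) := (hv.continuousOn).div_const 2
      have hIcc : ∀ t ∈ Ico (0:ℝ) 1, Icc (0:ℝ) t ⊆ Ico (0:ℝ) 1 := by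
        intro t ht σ hσ
        exact ⟨hσ.1, lt_of_le_of_lt hσ.2 ht.2⟩
      have hint : ∀ t ∈ Ico (0:ℝ) 1,
          IntervalIntegrable (fun σ => v σ / 2) MeasureTheory.volume 0 t := by
        intro t ht
        apply ContinuousOn.intervalIntegrable
        rw [uIcc_of_le ht.1]
        exact hvc.mono (hIcc t ht)
      have hder : ∀ t ∈ Ico (0:ℝ) 1, HasDerivWithinAt u (v t / 2) (Ico (0:ℝ) 1) t := by
        intro t ht
        rcases eq_or_lt_of_le ht.1 with h0 | h0
        · subst h0
          have hIooMem : Ioo (0:ℝ) 1 ∈ 𝓝[Ioi (0:ℝ)] (0:ℝ) := by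
            rw [← Ioi_inter_Iio]
            exact inter_mem self_mem_nhdsWithin
              (mem_nhdsWithin_of_mem_nhds (Iio_mem_nhds one_pos))
          have hmeas : StronglyMeasurableAtFilter (fun σ => v σ / 2) (𝓝[Ioi (0:ℝ)] (0:ℝ))
              MeasureTheory.volume :=
            ⟨Ioo 0 1, hIooMem,
              ((hvc.mono Ioo_subset_Ico_self).aestronglyMeasurable measurableSet_Ioo)⟩
          have hcw : ContinuousWithinAt (fun σ => v σ / 2) (Ioi (0:ℝ)) 0 :=
            ((hvc 0 (by norm_num)).mono Ioo_subset_Ico_self).mono_of_mem_nhdsWithin hIooMem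
          have h := intervalIntegral.integral_hasDerivWithinAt_right
            (s := Ici (0:ℝ)) (t := Ioi (0:ℝ)) (hint 0 (by norm_num)) hmeas hcw
          exact ((h.mono Ico_subset_Ici_self).const_add c)
        · have hnb : Ioo (0:ℝ) 1 ∈ 𝓝 t := isOpen_Ioo.mem_nhds ⟨h0, ht.2⟩
          have hmeas : StronglyMeasurableAtFilter (fun σ => v σ / 2) (𝓝 t)
              MeasureTheory.volume :=
            ⟨Ioo 0 1, hnb, ((hvc.mono Ioo_subset_Ico_self).aestronglyMeasurable measurableSet_Ioo)⟩
          have hca : ContinuousAt (fun σ => v σ / 2) t :=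
            hvc.continuousAt (mem_nhds_iff.mpr ⟨Ioo 0 1, Ioo_subset_Ico_self, isOpen_Ioo, ⟨h0, ht.2⟩⟩)
          have h := intervalIntegral.integral_hasDerivAt_right (hint t ht) hmeas hca
          exact (h.const_add c).hasDerivWithinAt
      have hu0 : u 0 = c := by
        rw [hudef]
        simp
      have hEq : Set.EqOn u (Tm m f) (Ico (0:ℝ) 1) := by
        have hφ : ∀ t ∈ Ioo (0:ℝ) 1, HasDerivAt (fun σ => Tm m f σ - u σ) 0 t := by
          intro t ht
          have h1 := hasDerivAt_Tm m f hf ht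
          have h2 := (hder t (Ioo_subset_Ico_self ht)).hasDerivAt
            (mem_nhds_iff.mpr ⟨Ioo 0 1, Ioo_subset_Ico_self, isOpen_Ioo, ht⟩)
          simpa [hvdef] using h1.fun_sub h2
        have hdiff : DifferentiableOn ℝ (fun σ => Tm m f σ - u σ) (Ioo (0:ℝ) 1) :=
          fun t ht => ((hφ t ht).differentiableAt).differentiableWithinAt
        have hfzero : ∀ t ∈ Ioo (0:ℝ) 1,
            fderivWithin ℝ (fun σ => Tm m f σ - u σ) (Ioo (0:ℝ) 1) t = 0 := by
          intro t ht
          have h1 : HasFDerivAt (fun σ => Tm m f σ - u σ)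
              ((1 : ℝ →L[ℝ] ℝ).smulRight (0:ℂ)) t := (hφ t ht).hasFDerivAt
          have h2 : ((1 : ℝ →L[ℝ] ℝ).smulRight (0:ℂ)) = 0 := by
            ext; simp
          rw [h2] at h1
          rw [h1.hasFDerivWithinAt.fderivWithin (isOpen_Ioo.uniqueDiffOn t ht)]
        have hconst : ∀ ⦃σ:ℝ⦄, σ ∈ Ioo (0:ℝ) 1 → ∀ ⦃τ:ℝ⦄, τ ∈ Ioo (0:ℝ) 1 →
            Tm m f σ - u σ = Tm m f τ - u τ := fun σ hσ τ hτ =>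
          (convex_Ioo (0:ℝ) 1).is_const_of_fderivWithin_eq_zero hdiff hfzero hσ hτ
        have hTlim : Filter.Tendsto (Tm m f) (𝓝[Ioo (0:ℝ) 1] 0) (𝓝 c) := by
          have := tendsto_Tm m f hf hvan
          rwa [show Tm m f 0 = c by rw [Tm, if_pos rfl]] at this
        have hulim : Filter.Tendsto u (𝓝[Ioo (0:ℝ) 1] 0) (𝓝 c) := by
          have h1 : ContinuousWithinAt u (Ico (0:ℝ) 1) 0 :=
            (hder 0 (by norm_num)).continuousWithinAt
          have h2 := h1.tendsto
          rw [hu0] at h2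
          exact h2.mono_left (nhdsWithin_mono 0 Ioo_subset_Ico_self)
        have hφlim : Filter.Tendsto (fun σ => Tm m f σ - u σ) (𝓝[Ioo (0:ℝ) 1] 0) (𝓝 0) := by
          have := hTlim.sub hulim
          rwa [sub_self] at this
        intro t ht
        rcases eq_or_lt_of_le ht.1 with h0 | h0
        · rw [← h0, hu0, Tm, if_pos rfl, hcdef]
        · have htI : t ∈ Ioo (0:ℝ) 1 := ⟨h0, ht.2⟩
          have hconst' : ∀ᶠ σ in 𝓝[Ioo (0:ℝ) 1] 0, (fun σ => Tm m f σ - u σ) σ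
              = Tm m f t - u t := by
            filter_upwards [self_mem_nhdsWithin] with σ hσ
            exact hconst hσ htI
          have h2 : Filter.Tendsto (fun σ => Tm m f σ - u σ) (𝓝[Ioo (0:ℝ) 1] 0)
              (𝓝 (Tm m f t - u t)) := by
            rw [tendsto_congr' hconst']
            exact tendsto_const_nhds
          have hNB : (𝓝[Ioo (0:ℝ) 1] (0:ℝ)).NeBot := by
            rw [nhdsWithin_Ioo_eq_nhdsGT one_pos]
            infer_instance
          have h3 := tendsto_nhds_unique h2 hφlim
          linear_combination -h3
      have hu_cd : ContDiffOn ℝ (n+1 : ℕ) u (Ico (0:ℝ) 1) := by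
        rw [show ((n+1:ℕ) : WithTop ℕ∞) = (n : WithTop ℕ∞) + 1 by norm_cast,
          contDiffOn_succ_iff_derivWithin (uniqueDiffOn_Ico 0 1)]
        refine ⟨fun t ht => (hder t ht).differentiableWithinAt, by simp, ?_⟩
        have hEqD : Set.EqOn (derivWithin u (Ico (0:ℝ) 1)) (fun σ => v σ / 2) (Ico (0:ℝ) 1) := by
          intro t ht
          exact (hder t ht).derivWithin (uniqueDiffOn_Ico 0 1 t ht)
        exact (hv.div_const 2).congr hEqD
      exact hu_cd.congr (fun t ht => (hEq ht).symm)

end WhitneyFactorizationAux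

open WhitneyFactorizationAux in
/-- An odd `C^∞` function `g : (-1,1) → ℂ` factors as `g(x) = x·u(x²)` with
`u : [0,1) → ℂ` smooth (Whitney's theorem on even functions). -/
theorem odd_smooth_factorization (g : ℝ → ℂ)
    (hg : ContDiffOn ℝ (⊤ : ℕ∞) g (Set.Ioo (-1 : ℝ) 1))
    (hodd : ∀ x ∈ Set.Ioo (-1 : ℝ) 1, g (-x) = -g x) :
    ∃ u : ℝ → ℂ, ContDiffOn ℝ (⊤ : ℕ∞) u (Set.Ico (0 : ℝ) 1) ∧
      ∀ x ∈ Set.Ioo (-1 : ℝ) 1, g x = (x : ℂ) * u (x ^ 2) := by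
  have hg0 : g 0 = 0 := by
    have h := hodd 0 (by norm_num)
    rw [neg_zero] at h
    have h2 : g 0 + g 0 = 0 := by nth_rewrite 1 [h]; ring
    exact add_self_eq_zero.mp h2
  have hvan : ∀ j, j < 2*0+1 → iteratedDeriv j g 0 = 0 := by
    intro j hj
    have hj0 : j = 0 := by omega
    subst hj0
    simpa [iteratedDeriv_zero] using hg0
  refine ⟨Tm 0 g, ?_, ?_⟩
  · exact contDiffOn_infty.mpr (fun n => main_ind n 0 g hg hodd hvan)
  · intro x hx
    rcases eq_or_ne x 0 with rfl | hx0
    · simp [hg0]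
    · have hx2 : x^2 ≠ 0 := pow_ne_zero _ hx0
      have hxC : (x:ℂ) ≠ 0 := by exact_mod_cast hx0
      rw [Tm, if_neg hx2, Real.sqrt_sq_eq_abs]
      rcases lt_or_gt_of_ne hx0 with hneg | hpos
      · rw [abs_of_neg hneg, hodd x hx]
        push_cast
        field_simp
      · rw [_root_.abs_of_pos hpos]
        push_cast
        field_simp
end
end

section
/- If f is a bisymplectomorphism of Δ, then there exists c ∈ ℂ with |c| = 1 such that the Fréchet derivative of f at 0 is the map u ↦ c·u; in particular Df(0) is ℂ-linear and is a linear automorphism of Δ. -/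
open Complex Set

noncomputable section

/-- The open unit disc in `ℂ`. -/
def unitDisc : Set ℂ := {z : ℂ | ‖z‖ < 1}

/-- The flat symplectic form `ω₀(u,v) = Im (conj u * v)` on `ℂ`. -/
def omega0 (u v : ℂ) : ℝ := ((starRingEnd ℂ) u * v).im

/-- The hyperbolic symplectic form `ω₋(z)(u,v) = Im (conj u * v) / (1 - |z|²)²` on the disc. -/
def omegaMinus (z u v : ℂ) : ℝ := ((starRingEnd ℂ) u * v).im / (1 - ‖z‖ ^ 2) ^ 2

/-- `f` is a smooth diffeomorphism of `s` onto `t`: it is `C^∞` on `s`, maps `s` to `t`,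
and has a `C^∞` inverse mapping `t` to `s`. -/
def IsSmoothDiffeoOn {E F : Type*} [NormedAddCommGroup E] [NormedSpace ℝ E]
    [NormedAddCommGroup F] [NormedSpace ℝ F] (f : E → F) (s : Set E) (t : Set F) : Prop :=
  ContDiffOn ℝ (⊤ : ℕ∞) f s ∧ Set.MapsTo f s t ∧
    ∃ g : F → E, ContDiffOn ℝ (⊤ : ℕ∞) g t ∧ Set.MapsTo g t s ∧ Set.InvOn g f s t


/-- The derivative at the origin of a bisymplectomorphism of the unit disc is
multiplication by a unimodular constant; in particular it is `ℂ`-linear and a linear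
automorphism of the disc. -/
theorem deriv_at_zero_of_bisymplectomorphism (f : ℂ → ℂ)
    (hf : IsSmoothDiffeoOn f unitDisc unitDisc)
    (h0 : ∀ z ∈ unitDisc, ∀ u v : ℂ,
      omega0 (fderiv ℝ f z u) (fderiv ℝ f z v) = omega0 u v)
    (hm : ∀ z ∈ unitDisc, ∀ u v : ℂ,
      omegaMinus (f z) (fderiv ℝ f z u) (fderiv ℝ f z v) = omegaMinus z u v) :
    ∃ c : ℂ, ‖c‖ = 1 ∧ ∀ u : ℂ, fderiv ℝ f 0 u = c * u := by
  have hopen : IsOpen unitDisc := isOpen_lt continuous_norm continuous_const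
  have hmem0 : (0:ℂ) ∈ unitDisc := by simp [unitDisc]
  -- Step 1: f preserves the modulus
  have habs : ∀ z ∈ unitDisc, ‖f z‖ = ‖z‖ := by
    intro z hz
    have h1 := h0 z hz 1 I
    have h2 := hm z hz 1 I
    have hfz : f z ∈ unitDisc := hf.2.1 hz
    have hz1 : ‖z‖ < 1 := hz
    have hfz1 : ‖f z‖ < 1 := hfz
    have ho : omega0 (1:ℂ) I = 1 := by simp [omega0]
    rw [ho] at h1
    unfold omegaMinus at h2
    unfold omega0 at h1
    rw [h1] at h2
    have hsimp : ((starRingEnd ℂ) (1:ℂ) * I).im = 1 := by simp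
    rw [hsimp] at h2
    have ha := norm_nonneg z
    have hb := norm_nonneg (f z)
    have hpa : (0:ℝ) < 1 - ‖z‖ ^ 2 := by nlinarith
    have hpb : (0:ℝ) < 1 - ‖f z‖ ^ 2 := by nlinarith
    field_simp at h2
    have h3 : 1 - ‖f z‖ ^ 2 = 1 - ‖z‖ ^ 2 := (pow_left_inj₀ hpb.le hpa.le two_ne_zero).mp h2.symm
    exact (pow_left_inj₀ hb ha two_ne_zero).mp (by linarith)
  have hf0 : f 0 = 0 := by
    have := habs 0 hmem0
    simpa using this
  have hdf : DifferentiableAt ℝ f 0 :=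
    (hf.1.contDiffAt (hopen.mem_nhds hmem0)).differentiableAt (by simp)
  set L := fderiv ℝ f 0 with hLdef
  -- Step 2: L is an isometry
  have key : ∀ u : ℂ, ‖L u‖ = ‖u‖ := by
    intro u
    have hline : HasDerivAt (fun t : ℝ => t • u) u 0 := by
      simpa using (hasDerivAt_id (0:ℝ)).smul_const u
    have h1 : HasFDerivAt f L ((fun t : ℝ => t • u) 0) := by
      simpa using hdf.hasFDerivAt
    have hg : HasDerivAt (fun t : ℝ => f (t • u)) (L u) 0 := by
      exact h1.comp_hasDerivAt 0 hline
    have hslope := hasDerivAt_iff_tendsto_slope.mp hg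
    have hnorm : Filter.Tendsto (fun t : ℝ => ‖slope (fun s : ℝ => f (s • u)) 0 t‖)
        (nhdsWithin (0:ℝ) {(0:ℝ)}ᶜ) (nhds ‖L u‖) := (continuous_norm.tendsto _).comp hslope
    have hev : ∀ᶠ t in nhdsWithin (0:ℝ) {(0:ℝ)}ᶜ,
        ‖slope (fun s : ℝ => f (s • u)) 0 t‖ = ‖u‖ := by
      have hcont : Filter.Tendsto (fun t : ℝ => t • u) (nhds (0:ℝ)) (nhds (0:ℂ)) := by
        have := (continuous_id.smul (continuous_const : Continuous fun _ : ℝ => u)).tendsto (0:ℝ)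
        exact ((continuous_id.smul continuous_const : Continuous fun t : ℝ => t • u)).tendsto' 0 0 (by simp)
      have hmem : ∀ᶠ t in nhds (0:ℝ), (t • u) ∈ unitDisc := hcont.eventually (hopen.mem_nhds hmem0)
      filter_upwards [nhdsWithin_le_nhds hmem, self_mem_nhdsWithin] with t ht ht0
      have ht0' : (t:ℝ) ≠ 0 := ht0
      have habst : ‖f (t • u)‖ = ‖t • u‖ := habs _ ht
      rw [slope_def_module]
      simp only [zero_smul, hf0, sub_zero, norm_smul]
      rw [habst]
      have : ‖t • u‖ = |t| * ‖u‖ := by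
        rw [norm_smul, Real.norm_eq_abs]
      rw [this, norm_inv, Real.norm_eq_abs]
      field_simp
    have := tendsto_nhds_unique ((Filter.tendsto_congr' hev).mp hnorm) tendsto_const_nhds
    rw [this]
  -- Step 3: orientation pins down the rotation
  have h1I := h0 0 hmem0 1 I
  have ho : omega0 (1:ℂ) I = 1 := by simp [omega0]
  rw [ho] at h1I
  set c := L 1 with hc_def
  set d := L I with hd_def
  have hc : ‖c‖ = 1 := by simpa using key 1
  have hd : ‖d‖ = 1 := by simpa using key I
  have hIm : ((starRingEnd ℂ) c * d).im = 1 := h1I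
  have habscd : ‖(starRingEnd ℂ) c * d‖ = 1 := by
    rw [norm_mul, Complex.norm_conj, hc, hd, one_mul]
  have hRe : ((starRingEnd ℂ) c * d).re = 0 := by
    have hsq := Complex.sq_norm ((starRingEnd ℂ) c * d)
    rw [habscd] at hsq
    have hns := Complex.normSq_apply ((starRingEnd ℂ) c * d)
    nlinarith [hIm, sq_nonneg (((starRingEnd ℂ) c * d).re)]
  have hcd : (starRingEnd ℂ) c * d = I :=
    Complex.ext (by rw [hRe, Complex.I_re]) (by rw [hIm, Complex.I_im])
  have hcc : c * (starRingEnd ℂ) c = 1 := by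
    rw [Complex.mul_conj]
    rw [Complex.normSq_eq_norm_sq, hc]
    norm_num
  have hdcI : d = c * I := by
    calc d = (c * (starRingEnd ℂ) c) * d := by rw [hcc, one_mul]
    _ = c * ((starRingEnd ℂ) c * d) := by ring
    _ = c * I := by rw [hcd]
  refine ⟨c, hc, fun u => ?_⟩
  have hu : u = u.re • (1:ℂ) + u.im • I := by
    simp [Complex.real_smul, Complex.re_add_im]
  have hlin : L u = u.re • c + u.im • d := by
    conv_lhs => rw [hu]
    rw [map_add, map_smul, map_smul]
  rw [hlin, hdcI]
  simp only [Complex.real_smul]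
  linear_combination c * Complex.re_add_im u
end
end

section
/- The duality map F : Δ → ℂ, F(z) = z/√(1 − |z|²), satisfies F*ω₀ = ω₋; that is, for all z ∈ Δ and all u, v ∈ ℂ, ω₀(DF(z)u, DF(z)v) = ω₋(z)(u,v). -/
open Complex Set

noncomputable section

/-- The duality map `F(z) = z / √(1 - |z|²)` of the unit disc. -/
def dualityMap (z : ℂ) : ℂ := z / (Real.sqrt (1 - ‖z‖ ^ 2) : ℂ)

lemma disc_pos {z : ℂ} (hz : ‖z‖ < 1) :
    0 < 1 - (z.re * z.re + z.im * z.im) := by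
  have h1 : Complex.normSq z < 1 := by
    have := Complex.sq_norm z
    nlinarith [norm_nonneg z]
  have := Complex.normSq_apply z
  nlinarith

lemma fderiv_dm (z : ℂ) (hz : ‖z‖ < 1) (u : ℂ) :
    fderiv ℝ dualityMap z u =
      (Real.sqrt (1 - (z.re * z.re + z.im * z.im)))⁻¹ • u +
      (((Real.sqrt (1 - (z.re * z.re + z.im * z.im)))⁻¹ ^ 3) *
        (z.re * u.re + z.im * u.im)) • z := by
  have ht : 0 < 1 - (z.re * z.re + z.im * z.im) := disc_pos hz
  have hs : 0 < Real.sqrt (1 - (z.re * z.re + z.im * z.im)) := Real.sqrt_pos.2 ht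
  have hdm : dualityMap = fun w : ℂ =>
      (Real.sqrt (1 - (w.re * w.re + w.im * w.im)))⁻¹ • w := by
    funext w
    simp [dualityMap, Complex.sq_norm, Complex.normSq_apply, div_eq_inv_mul,
      Complex.real_smul, Complex.ofReal_inv, mul_comm]
  have hre : HasFDerivAt (fun w : ℂ => w.re) Complex.reCLM z := Complex.reCLM.hasFDerivAt
  have him : HasFDerivAt (fun w : ℂ => w.im) Complex.imCLM z := Complex.imCLM.hasFDerivAt
  have hN : HasFDerivAt (fun w : ℂ => 1 - (w.re * w.re + w.im * w.im))
      (-(z.re • Complex.reCLM + z.re • Complex.reCLM +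
        (z.im • Complex.imCLM + z.im • Complex.imCLM))) z :=
    ((hre.mul hre).add (him.mul him)).const_sub 1
  have hsqrt : HasDerivAt Real.sqrt
      (1 / (2 * Real.sqrt (1 - (z.re * z.re + z.im * z.im))))
      (1 - (z.re * z.re + z.im * z.im)) := Real.hasDerivAt_sqrt ht.ne'
  have hinv : HasDerivAt (fun t : ℝ => (Real.sqrt t)⁻¹)
      (-(1 / (2 * Real.sqrt (1 - (z.re * z.re + z.im * z.im)))) /
        (Real.sqrt (1 - (z.re * z.re + z.im * z.im))) ^ 2)
      (1 - (z.re * z.re + z.im * z.im)) := hsqrt.inv hs.ne'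
  have hφ : HasFDerivAt (fun w : ℂ => (Real.sqrt (1 - (w.re * w.re + w.im * w.im)))⁻¹)
      ((-(1 / (2 * Real.sqrt (1 - (z.re * z.re + z.im * z.im)))) /
        (Real.sqrt (1 - (z.re * z.re + z.im * z.im))) ^ 2) •
        (-(z.re • Complex.reCLM + z.re • Complex.reCLM +
          (z.im • Complex.imCLM + z.im • Complex.imCLM)))) z := by
    exact HasDerivAt.comp_hasFDerivAt (h₂ := fun t : ℝ => (Real.sqrt t)⁻¹)
      (f := fun w : ℂ => 1 - (w.re * w.re + w.im * w.im)) z hinv hN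
  have H := hφ.smul (hasFDerivAt_id z)
  simp only [id_eq, ContinuousLinearMap.id_apply] at H
  rw [hdm, show fderiv ℝ (fun w : ℂ => (Real.sqrt (1 - (w.re * w.re + w.im * w.im)))⁻¹ • w) z = _ from H.fderiv]
  simp only [ContinuousLinearMap.add_apply, ContinuousLinearMap.smul_apply,
    ContinuousLinearMap.smulRight_apply, ContinuousLinearMap.id_apply,
    ContinuousLinearMap.neg_apply, Complex.reCLM_apply, Complex.imCLM_apply,
    smul_eq_mul]
  congr 1
  congr 1
  have hpos : (0:ℝ) < 1 + (-z.re ^ 2 - z.im ^ 2) := by nlinarith [ht]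
  have hsA : Real.sqrt (1 + (-z.re ^ 2 - z.im ^ 2)) ^ 2 = 1 + (-z.re ^ 2 - z.im ^ 2) :=
    Real.sq_sqrt hpos.le
  ring_nf

/-- The duality map pulls the flat symplectic form back to the hyperbolic form:
`F*ω₀ = ω₋`. -/
theorem dualityMap_pullback_flat_eq_hyperbolic :
    ∀ z ∈ unitDisc, ∀ u v : ℂ,
      omega0 (fderiv ℝ dualityMap z u) (fderiv ℝ dualityMap z v) = omegaMinus z u v := by
  intro z hz u v
  have hz' : ‖z‖ < 1 := hz
  have ht : 0 < 1 - (z.re * z.re + z.im * z.im) := disc_pos hz'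
  have habs : (1 - ‖z‖ ^ 2) = 1 - (z.re * z.re + z.im * z.im) := by
    rw [Complex.sq_norm, Complex.normSq_apply]
  rw [fderiv_dm z hz' u, fderiv_dm z hz' v, omega0, omegaMinus, habs,
    ← Real.sq_sqrt ht.le]
  simp only [Complex.mul_im, Complex.conj_re, Complex.conj_im,
    Complex.add_re, Complex.add_im, Complex.smul_re, Complex.smul_im]
  set s : ℝ := Real.sqrt (1 - (z.re * z.re + z.im * z.im)) with hsdef
  have hs : 0 < s := Real.sqrt_pos.2 ht
  have hs2 : s ^ 2 = 1 - (z.re * z.re + z.im * z.im) := Real.sq_sqrt ht.le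
  have hr : z.re * z.re + z.im * z.im = 1 - s ^ 2 := by linarith
  rw [Real.sqrt_sq hs.le]
  field_simp
  have h2 : s ^ 4 * s⁻¹ ^ 2 = s ^ 2 := by field_simp
  have h4 : s ^ 4 * s⁻¹ ^ 4 = 1 := by field_simp
  linear_combination (u.re * v.im - u.im * v.re) * hr + (u.re * v.im - u.im * v.re) * h2 +
    (u.re * v.im - u.im * v.re) * (z.re ^ 2 + z.im ^ 2) * h4
end
end

section
/- The duality map F : Δ → ℂ, F(z) = z/√(1 − |z|²), satisfies F*ω₊ = ω₀; that is, for all z ∈ Δ and all u, v ∈ ℂ, ω₊(F(z))(DF(z)u, DF(z)v) = ω₀(u,v). -/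
open Complex Set

noncomputable section

/-- The Fubini-Study form `ω₊(z)(u,v) = Im (conj u * v) / (1 + |z|²)²` on `ℂ`. -/
def omegaPlus (z u v : ℂ) : ℝ := ((starRingEnd ℂ) u * v).im / (1 + ‖z‖ ^ 2) ^ 2

lemma duality_inner_eval (z u : ℂ) : (inner ℝ z u : ℝ) = z.re*u.re + z.im*u.im := by
  rw [Complex.inner]; simp [Complex.mul_re]; ring

lemma duality_fderiv_eval (z : ℂ) (hz : ‖z‖ < 1) (u : ℂ) :
    fderiv ℝ dualityMap z u
      = ((Real.sqrt (1 - ‖z‖ ^ 2) : ℝ)⁻¹ : ℂ) * u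
        + (((z.re*u.re + z.im*u.im) / (Real.sqrt (1 - ‖z‖ ^ 2))^3 : ℝ) : ℂ) * z := by
  set t : ℝ := 1 - ‖z‖ ^ 2 with ht
  have ht0 : 0 < t := by
    have := norm_nonneg z
    nlinarith
  set s : ℝ := Real.sqrt t with hs
  have hs0 : 0 < s := Real.sqrt_pos.2 ht0
  have hs2 : s ^ 2 = t := Real.sq_sqrt ht0.le
  have h1 : HasFDerivAt (fun w : ℂ => 1 - ‖w‖ ^ 2) (-(2 • (innerSL ℝ z))) z := by
    have h := (hasFDerivAt_id z).norm_sq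
    simp only [ContinuousLinearMap.comp_id] at h
    have h' := (hasFDerivAt_const (1:ℝ) z).sub h
    simp only [zero_sub] at h'
    exact h'
  have h2 := (Real.hasDerivAt_sqrt ht0.ne').comp_hasFDerivAt z h1
  have h3 := (hasDerivAt_inv hs0.ne').comp_hasFDerivAt z h2
  have h4 := Complex.ofRealCLM.hasFDerivAt.comp z h3
  have h5 := (hasFDerivAt_id z).mul' h4
  have hfun : (id * (⇑Complex.ofRealCLM ∘ (fun y => y⁻¹) ∘ (fun x => Real.sqrt x) ∘ fun w => 1 - ‖w‖ ^ 2)) = dualityMap := by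
    funext w
    simp [Pi.mul_apply, dualityMap, div_eq_mul_inv, Function.comp, Complex.ofReal_inv]
  rw [hfun] at h5
  rw [h5.fderiv]
  simp only [ContinuousLinearMap.add_apply, ContinuousLinearMap.smul_apply,
    ContinuousLinearMap.smulRight_apply, ContinuousLinearMap.comp_apply,
    ContinuousLinearMap.neg_apply, innerSL_apply_apply, ContinuousLinearMap.id_apply,
    Complex.ofRealCLM_apply, id]
  simp only [MulOpposite.smul_eq_mul_unop, MulOpposite.unop_op, Function.comp_apply,
    Complex.ofRealCLM_apply, ← ht, ← hs]
  rw [duality_inner_eval]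
  push_cast
  have hsne : (s : ℂ) ≠ 0 := by exact_mod_cast hs0.ne'
  field_simp
  simp only [smul_eq_mul]
  push_cast
  field_simp
  ring

/-- The duality map pulls the Fubini-Study form back to the flat form: `F*ω₊ = ω₀`. -/
theorem dualityMap_pullback_fubiniStudy_eq_flat :
    ∀ z ∈ unitDisc, ∀ u v : ℂ,
      omegaPlus (dualityMap z) (fderiv ℝ dualityMap z u) (fderiv ℝ dualityMap z v)
        = omega0 u v := by
  intro z hz u v
  have hz' : ‖z‖ < 1 := hz
  set t : ℝ := 1 - ‖z‖ ^ 2 with ht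
  have ht0 : 0 < t := by have := norm_nonneg z; nlinarith
  set s : ℝ := Real.sqrt t with hs
  have hs0 : 0 < s := Real.sqrt_pos.2 ht0
  have hs2 : s ^ 2 = t := Real.sq_sqrt ht0.le
  have habs : ‖z‖ ^ 2 = z.re ^ 2 + z.im ^ 2 := by
    rw [Complex.sq_norm, Complex.normSq_apply]; ring
  have hFabs : ‖dualityMap z‖ ^ 2 = (z.re ^ 2 + z.im ^ 2) / s ^ 2 := by
    rw [dualityMap, norm_div, ← hs, div_pow, habs]
    simp [Complex.norm_real, abs_of_pos hs0]
  rw [duality_fderiv_eval z hz' u, duality_fderiv_eval z hz' v]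
  rw [omegaPlus, omega0, hFabs]
  rw [← ht, ← hs, ← Complex.ofReal_inv]
  have hs2' : s ^ 2 = 1 - (z.re ^ 2 + z.im ^ 2) := by rw [hs2, ht, habs]
  simp only [map_add, map_mul, Complex.mul_im, Complex.add_im, Complex.add_re,
    Complex.conj_re, Complex.conj_im, Complex.ofReal_re, Complex.ofReal_im,
    Complex.mul_re, map_inv₀, Complex.conj_ofReal]
  field_simp
  linear_combination (-(u.re*v.im - u.im*v.re) * s^2 * (z.re^2+z.im^2+s^2)) * hs2'
end
end
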